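/- Let u ∈ ℝ^d with sorted entries u_(1) ≥ … ≥ u_(d), let 1 ≤ k < d with gap Δ_k = u_(k) − u_(k+1) > 0, let S = S_k(u) be the salient set, let η > 0, and let α be the softmax of ηu with tail mass t = Σ_{i ∉ S} α_i; assume t < 1. Let δ ∈ ℝ^d with 0 ≤ δ_i ≤ B for all i and some B > 0, and define D = Σ_{i=1}^d α_i δ_i and d_S = Σ_{i ∈ S} (α_i/(1 − t)) δ_i. Then |D − d_S| ≤ 2B·((d − k)/k)·exp(−η Δ_k). -/

import Mathlib

open Finset Real

/-- Let `u ∈ ℝ^d` with decreasingly sorted entries given by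
`v` (a rearrangement of `u` along a permutation `e`), `1 ≤ k < d` with gap
`Δ_k = u_(k) − u_(k+1) > 0`, `S = S_k(u)` the salient set, `η > 0`, `α` the
softmax of `ηu` with tail mass `t = ∑_{i ∉ S} α_i < 1`, and `0 ≤ δ_i ≤ B` with
`B > 0`. With `D = ∑ i, α_i δ_i` and `d_S = ∑_{i ∈ S} (α_i/(1−t)) δ_i`,
`|D − d_S| ≤ 2B·((d−k)/k)·exp(−η Δ_k)`. -/
theorem dcd_relaxation_rate (d k : ℕ) (hk1 : 1 ≤ k) (hkd : k < d)
    (u v : Fin d → ℝ) (e : Equiv.Perm (Fin d))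
    (hv : ∀ i, v i = u (e i))
    (hsorted : ∀ i j : Fin d, i ≤ j → v j ≤ v i)
    (hgap : 0 < v ⟨k - 1, by omega⟩ - v ⟨k, hkd⟩)
    (η : ℝ) (hη : 0 < η)
    (α : Fin d → ℝ)
    (hα : ∀ i, α i = Real.exp (η * u i) / ∑ j, Real.exp (η * u j))
    (ht : ∑ i ∈ Finset.univ \
        Finset.univ.filter (fun i => v ⟨k - 1, by omega⟩ ≤ u i), α i < 1)
    (δ : Fin d → ℝ) (B : ℝ) (hB : 0 < B)
    (hδ0 : ∀ i, 0 ≤ δ i) (hδB : ∀ i, δ i ≤ B) :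
    |(∑ i, α i * δ i) -
        ∑ i ∈ Finset.univ.filter (fun i => v ⟨k - 1, by omega⟩ ≤ u i),
          (α i / (1 - ∑ i ∈ Finset.univ \
            Finset.univ.filter (fun i => v ⟨k - 1, by omega⟩ ≤ u i), α i)) * δ i| ≤
      2 * B * (((d : ℝ) - k) / k) *
        Real.exp (-η * (v ⟨k - 1, by omega⟩ - v ⟨k, hkd⟩)) := by
  set a := v ⟨k - 1, by omega⟩ with ha
  set b := v ⟨k, hkd⟩ with hb
  set S : Finset (Fin d) := Finset.univ.filter (fun i => a ≤ u i) with hS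
  set Z : ℝ := ∑ j, Real.exp (η * u j) with hZ
  have hZpos : 0 < Z :=
    Finset.sum_pos (fun j _ => Real.exp_pos _) ⟨⟨0, by omega⟩, Finset.mem_univ _⟩
  have hαpos : ∀ i, 0 < α i := fun i => by rw [hα]; positivity
  have hsum1 : ∑ i, α i = 1 := by
    simp only [hα]
    rw [← Finset.sum_div, ← hZ]
    field_simp
  set t := ∑ i ∈ Finset.univ \ S, α i with htdef
  have ht0 : 0 ≤ t := Finset.sum_nonneg fun i _ => (hαpos i).le
  have h1t : 0 < 1 - t := by linarith
  -- card S ≥ k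
  have hcardS : k ≤ S.card := by
    have : (Finset.univ : Finset (Fin k)).card ≤ S.card := by
      apply Finset.card_le_card_of_injOn (fun i => e ⟨i.1, lt_trans i.2 hkd⟩)
      · intro i _
        simp only [hS, Finset.mem_coe, Finset.mem_filter, Finset.mem_univ, true_and]
        have := hv ⟨i.1, lt_trans i.2 hkd⟩
        rw [← this]
        exact hsorted _ ⟨k - 1, by omega⟩ (by simp [Fin.le_def]; omega)
      · intro i _ j _ hij
        have := e.injective hij
        have : i.1 = j.1 := by simpa [Fin.ext_iff] using this
        exact Fin.ext this
    simpa using this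
  -- Z lower bound
  have hZge : (k : ℝ) * Real.exp (η * a) ≤ Z := by
    have h1 : ∑ j ∈ S, Real.exp (η * a) ≤ ∑ j ∈ S, Real.exp (η * u j) := by
      apply Finset.sum_le_sum
      intro j hj
      have : a ≤ u j := (Finset.mem_filter.mp hj).2
      exact Real.exp_le_exp.mpr (by nlinarith)
    have h2 : ∑ j ∈ S, Real.exp (η * u j) ≤ Z := by
      rw [hZ]
      exact Finset.sum_le_sum_of_subset_of_nonneg (Finset.subset_univ _)
        (fun i _ _ => (Real.exp_pos _).le)
    have h3 : (k : ℝ) * Real.exp (η * a) ≤ S.card * Real.exp (η * a) := by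
      have : (k : ℝ) ≤ S.card := by exact_mod_cast hcardS
      nlinarith [Real.exp_pos (η * a)]
    rw [Finset.sum_const, nsmul_eq_mul] at h1
    linarith
  -- for i ∉ S, u i ≤ b
  have hub : ∀ i, i ∉ S → u i ≤ b := by
    intro i hi
    have hlt : u i < a := by
      by_contra h
      exact hi (Finset.mem_filter.mpr ⟨Finset.mem_univ _, le_of_not_gt h⟩)
    have hui : u i = v (e.symm i) := by rw [hv (e.symm i), Equiv.apply_symm_apply]
    have hk' : k ≤ (e.symm i).1 := by
      by_contra h
      push_neg at h
      have : a ≤ v (e.symm i) :=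
        hsorted _ ⟨k - 1, by omega⟩ (by simp [Fin.le_def]; omega)
      rw [← hui] at this
      linarith
    have : v (e.symm i) ≤ b := hsorted ⟨k, hkd⟩ _ (by simp [Fin.le_def]; omega)
    linarith
  set E : ℝ := Real.exp (-η * (a - b)) with hE
  have hEpos : 0 < E := Real.exp_pos _
  -- α bound outside S
  have hαb : ∀ i, i ∉ S → α i ≤ E / k := by
    intro i hi
    rw [hα]
    have h1 : Real.exp (η * u i) ≤ Real.exp (η * b) :=
      Real.exp_le_exp.mpr (by nlinarith [hub i hi])
    have hkpos : (0:ℝ) < k := by exact_mod_cast hk1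
    rw [div_le_div_iff₀ hZpos hkpos]
    have h2 : Real.exp (η * u i) * k ≤ Real.exp (η * b) * k := by nlinarith
    have h3 : Real.exp (η * b) * k ≤ E * Z := by
      have : E * ((k : ℝ) * Real.exp (η * a)) ≤ E * Z := by nlinarith
      have he : E * Real.exp (η * a) = Real.exp (η * b) := by
        rw [hE, ← Real.exp_add]; ring_nf
      nlinarith [this, he]
    linarith
  -- card of complement
  have hcardSc : ((Finset.univ \ S).card : ℝ) ≤ (d : ℝ) - k := by
    have h1 : (Finset.univ \ S).card = d - S.card := by
      rw [Finset.card_sdiff_of_subset (Finset.subset_univ _)]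
      simp
    have h2 : S.card ≤ d := by
      simpa using Finset.card_le_card (Finset.subset_univ S)
    rw [h1]
    push_cast [Nat.cast_sub h2]
    have : (k : ℝ) ≤ S.card := by exact_mod_cast hcardS
    linarith
  have hkpos : (0:ℝ) < k := by exact_mod_cast hk1
  -- t bound
  have htle : t ≤ ((d : ℝ) - k) / k * E := by
    have h1 : t ≤ ∑ i ∈ Finset.univ \ S, E / k :=
      Finset.sum_le_sum fun i hi => hαb i ((Finset.mem_sdiff.mp hi).2)
    rw [Finset.sum_const, nsmul_eq_mul] at h1
    have h2 : ((Finset.univ \ S).card : ℝ) * (E / k) ≤ (((d:ℝ) - k)) * (E / k) := by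
      have : 0 ≤ E / k := by positivity
      nlinarith
    calc t ≤ ((Finset.univ \ S).card : ℝ) * (E / k) := h1
      _ ≤ ((d:ℝ) - k) * (E / k) := h2
      _ = ((d:ℝ) - k) / k * E := by ring
  -- main decomposition
  have hsplit : ∑ i ∈ Finset.univ \ S, α i * δ i + ∑ i ∈ S, α i * δ i
      = ∑ i, α i * δ i := Finset.sum_sdiff (Finset.subset_univ S)
  have hαsplit : t + ∑ i ∈ S, α i = 1 := by
    rw [htdef, Finset.sum_sdiff (Finset.subset_univ S), hsum1]
  set A := ∑ i ∈ S, α i * δ i with hA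
  set T := ∑ i ∈ Finset.univ \ S, α i * δ i with hT
  have hA0 : 0 ≤ A := Finset.sum_nonneg fun i _ => mul_nonneg (hαpos i).le (hδ0 i)
  have hAle : A ≤ (1 - t) * B := by
    have h1 : A ≤ ∑ i ∈ S, α i * B :=
      Finset.sum_le_sum fun i _ => mul_le_mul_of_nonneg_left (hδB i) (hαpos i).le
    rw [← Finset.sum_mul] at h1
    have : ∑ i ∈ S, α i = 1 - t := by linarith
    rw [this] at h1
    exact h1
  have hT0 : 0 ≤ T := Finset.sum_nonneg fun i _ => mul_nonneg (hαpos i).le (hδ0 i)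
  have hTle : T ≤ t * B := by
    have h1 : T ≤ ∑ i ∈ Finset.univ \ S, α i * B :=
      Finset.sum_le_sum fun i _ => mul_le_mul_of_nonneg_left (hδB i) (hαpos i).le
    rw [← Finset.sum_mul] at h1
    exact h1
  have hdS : ∑ i ∈ S, (α i / (1 - t)) * δ i = A / (1 - t) := by
    rw [hA, Finset.sum_div]
    apply Finset.sum_congr rfl
    intro i _
    ring
  rw [hdS]
  have hdiff : (∑ i, α i * δ i) - A / (1 - t) = T - A * t / (1 - t) := by
    rw [← hsplit]
    field_simp
    ring
  rw [hdiff]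
  have hAtle : A * t / (1 - t) ≤ t * B := by
    rw [div_le_iff₀ h1t]
    have := mul_le_mul_of_nonneg_right hAle ht0
    linarith
  have hAt0 : 0 ≤ A * t / (1 - t) := div_nonneg (mul_nonneg hA0 ht0) h1t.le
  have habs : |T - A * t / (1 - t)| ≤ t * B := by
    rw [abs_le]
    constructor <;> linarith
  have hdk : 0 ≤ ((d:ℝ) - k) / k := by
    have hkr : (k:ℝ) ≤ d := by exact_mod_cast hkd.le
    exact div_nonneg (by linarith) hkpos.le
  clear_value A T t E Z S a b
  have hfinal : t * B ≤ 2 * B * (((d : ℝ) - k) / k) * E := by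
    have h1 := mul_le_mul_of_nonneg_right htle hB.le
    have h2 : 0 ≤ B * (((d:ℝ) - k) / k) * E := mul_nonneg (mul_nonneg hB.le hdk) hEpos.le
    linarith
  linarith
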